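/- Let A be an abelian group such that B := A/div(A) is finitely generated, where div(A) is the subgroup of divisible elements. Choose n ≥ 1 such that nB is free, and let C ⊆ A be the preimage of nB under the projection A → B. Then C is the internal direct sum of a subgroup mapping isomorphically to nB and div(A); in particular div(C) = div(A). -/

import Mathlib

/-- The subgroup of divisible elements of an abelian group. -/
def divSubgroup (A : Type*) [AddCommGroup A] : AddSubgroup A where
  carrier := {x | ∀ n : ℕ, 0 < n → ∃ y : A, n • y = x}
  zero_mem' := fun n _ => ⟨0, smul_zero n⟩
  add_mem' := by
    intro a b ha hb n hn
    obtain ⟨y, hy⟩ := ha n hn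
    obtain ⟨z, hz⟩ := hb n hn
    exact ⟨y + z, by rw [smul_add, hy, hz]⟩
  neg_mem' := by
    intro a ha n hn
    obtain ⟨y, hy⟩ := ha n hn
    exact ⟨-y, by rw [smul_neg, hy]⟩

/-- The subgroup `nM` of `n`-th multiples of an abelian group `M`. -/
def nMul (M : Type*) [AddCommGroup M] (n : ℕ) : AddSubgroup M :=
  ((n : ℤ) • AddMonoidHom.id M).range

/-- Let `A` be an abelian group with `B = A/div(A)` finitely generated, let `n ≥ 1`
be such that `nB` is free, and let `C ⊆ A` be the preimage of `nB` in `A`. Then `C`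
is the internal direct sum of a subgroup mapping isomorphically onto `nB` and
`div(A)`; in particular the divisible elements of `C` are exactly `div(A)`. -/
theorem stmt6 {A : Type*} [AddCommGroup A]
    (hFG : AddGroup.FG (A ⧸ divSubgroup A)) (n : ℕ) (hn : 0 < n)
    (hfree : Module.Free ℤ (nMul (A ⧸ divSubgroup A) n)) :
    ∃ S : AddSubgroup A,
      S ≤ (nMul (A ⧸ divSubgroup A) n).comap (QuotientAddGroup.mk' (divSubgroup A)) ∧
      S ⊓ divSubgroup A = ⊥ ∧
      S ⊔ divSubgroup A =
        (nMul (A ⧸ divSubgroup A) n).comap (QuotientAddGroup.mk' (divSubgroup A)) ∧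
      AddSubgroup.map (QuotientAddGroup.mk' (divSubgroup A)) S =
        nMul (A ⧸ divSubgroup A) n ∧
      Function.Injective (fun s : S => QuotientAddGroup.mk' (divSubgroup A) s.1) ∧
      (∀ x ∈ (nMul (A ⧸ divSubgroup A) n).comap (QuotientAddGroup.mk' (divSubgroup A)),
        ((∀ m : ℕ, 0 < m → ∃ y ∈ (nMul (A ⧸ divSubgroup A) n).comap
            (QuotientAddGroup.mk' (divSubgroup A)), m • y = x) ↔ x ∈ divSubgroup A)) := by
  classical
  set B := A ⧸ divSubgroup A with hB
  set π : A →+ B := QuotientAddGroup.mk' (divSubgroup A) with hπ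
  set F : AddSubgroup B := nMul B n with hF
  set C : AddSubgroup A := F.comap π with hC
  -- the restricted projection C →+ F
  have hmem : ∀ x : C, π x.1 ∈ F := fun x => x.2
  set p : C →+ F := AddMonoidHom.codRestrict (π.comp C.subtype) F hmem with hp
  have hpval : ∀ x : C, (p x : B) = π x.1 := fun x => rfl
  have psurj : Function.Surjective p := by
    rintro ⟨b, hb⟩
    obtain ⟨a, ha⟩ := QuotientAddGroup.mk'_surjective (divSubgroup A) b
    refine ⟨⟨a, ?_⟩, ?_⟩
    · exact (congrArg (· ∈ F) ha).mpr hb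
    · ext; exact ha
  have psurjl : Function.Surjective p.toIntLinearMap := psurj
  obtain ⟨s, hs⟩ := Module.projective_lifting_property (R := ℤ)
    p.toIntLinearMap (LinearMap.id (M := F)) psurjl
  have hsec : ∀ b : F, p (s b) = b := fun b => congrArg (fun f => f b) hs
  set σ : F →+ A := C.subtype.comp s.toAddMonoidHom with hσ
  have hσmem : ∀ b : F, σ b ∈ C := fun b => (s b).2
  have hπσ : ∀ b : F, π (σ b) = (b : B) := by
    intro b
    have := congrArg (Subtype.val) (hsec b)
    exact this
  refine ⟨σ.range, ?_, ?_, ?_, ?_, ?_, ?_⟩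
  · rintro x ⟨b, rfl⟩
    exact hσmem b
  · -- S ⊓ div = ⊥
    rw [eq_bot_iff]
    rintro x ⟨⟨b, rfl⟩, hdiv⟩
    have h0 : π (σ b) = 0 := (QuotientAddGroup.eq_zero_iff _).2 hdiv
    have : (b : B) = 0 := by rw [← hπσ b, h0]
    have hb0 : b = 0 := Subtype.ext this
    simp [hb0]
  · -- S ⊔ div = C
    apply le_antisymm
    · refine sup_le ?_ ?_
      · rintro x ⟨b, rfl⟩; exact hσmem b
      · intro x hx
        have : π x = 0 := (QuotientAddGroup.eq_zero_iff _).2 hx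
        simp [hC, AddSubgroup.mem_comap, this]
    · intro x hx
      have hx' : π (x - σ (p ⟨x, hx⟩)) = 0 := by
        rw [map_sub, hπσ, hpval]
        simp
      have hdiv : x - σ (p ⟨x, hx⟩) ∈ divSubgroup A :=
        (QuotientAddGroup.eq_zero_iff _).1 hx'
      have : x = σ (p ⟨x, hx⟩) + (x - σ (p ⟨x, hx⟩)) := by abel
      rw [this]
      exact AddSubgroup.add_mem_sup ⟨_, rfl⟩ hdiv
  · -- map π S = F
    apply le_antisymm
    · rintro y ⟨x, ⟨b, rfl⟩, rfl⟩
      rw [hπσ]; exact b.2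
    · rintro b hb
      exact ⟨σ ⟨b, hb⟩, ⟨⟨b, hb⟩, rfl⟩, hπσ _⟩
  · -- injectivity
    rintro ⟨x, b, rfl⟩ ⟨y, b', rfl⟩ h
    have : (b : B) = (b' : B) := by
      simpa [hπσ] using h
    have : b = b' := Subtype.ext this
    subst this
    rfl
  · -- divisibility characterization
    intro x hx
    constructor
    · intro h m hm
      obtain ⟨y, _, hy⟩ := h m hm
      exact ⟨y, hy⟩
    · intro hdiv m hm
      obtain ⟨y, hy⟩ := hdiv (m * n) (Nat.mul_pos hm hn)
      refine ⟨n • y, ?_, by rw [← mul_smul]; exact hy⟩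
      simp only [hC, AddSubgroup.mem_comap, map_nsmul]
      exact ⟨π y, by simp [natCast_zsmul]⟩
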